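/- For a Schur product channel Φ(X) = C ∘ X where C is an n×n correlation matrix, the rank of Φ as a linear map equals the number of nonzero entries of C, and rank(Φ)·rank(C ∘ conj(C)) ≥ n². -/

import Mathlib

open scoped ComplexOrder

open Matrix

private lemma correlation_abs_le_one {n : ℕ} {C : Matrix (Fin n) (Fin n) ℂ}
    (hC : C.PosSemidef) (hdiag : ∀ i, C i i = 1) (i j : Fin n) :
    ‖C i j‖ ≤ 1 := by
  obtain ⟨B, hB⟩ : ∃ B : Matrix (Fin n) (Fin n) ℂ, C = Bᴴ * B := by
    open MatrixOrder in
    obtain ⟨B, hB⟩ := CStarAlgebra.nonneg_iff_eq_star_mul_self.mp hC.nonneg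
    exact ⟨B, hB⟩
  set u : Fin n → EuclideanSpace ℂ (Fin n) :=
    fun a => (WithLp.equiv 2 _).symm (fun k => B k a) with hu
  have key : ∀ a b, C a b = inner ℂ (u a) (u b) := by
    intro a b
    rw [hB]
    simp [Matrix.mul_apply, PiLp.inner_apply, u, Matrix.conjTranspose_apply,
      RCLike.inner_apply]
    exact Finset.sum_congr rfl fun k _ => mul_comm _ _
  have hnorm : ∀ a, ‖u a‖ = 1 := by
    intro a
    have h : (inner ℂ (u a) (u a) : ℂ) = 1 := by rw [← key, hdiag]
    rw [inner_self_eq_norm_sq_to_K] at h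
    rw [← RCLike.ofReal_pow, ← RCLike.ofReal_one (K := ℂ)] at h
    have h' : (‖u a‖) ^ 2 = 1 := RCLike.ofReal_inj.mp h
    nlinarith [norm_nonneg (u a)]
  calc ‖C i j‖ = ‖(inner ℂ (u i) (u j) : ℂ)‖ := by rw [key]
    _ ≤ ‖u i‖ * ‖u j‖ := norm_inner_le_norm _ _
    _ = 1 := by rw [hnorm, hnorm, mul_one]

private lemma range_phi {n : ℕ} (C : Matrix (Fin n) (Fin n) ℂ)
    (Φ : Matrix (Fin n) (Fin n) ℂ →ₗ[ℂ] Matrix (Fin n) (Fin n) ℂ)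
    (hΦ : ∀ X, Φ X = C ⊙ X) :
    LinearMap.range Φ = Submodule.span ℂ
      (Set.range fun q : {q : Fin n × Fin n // C q.1 q.2 ≠ 0} =>
        Matrix.single q.1.1 q.1.2 (1 : ℂ)) := by
  apply le_antisymm
  · rintro _ ⟨X, rfl⟩
    rw [hΦ]
    have hdecomp : C ⊙ X = ∑ q : Fin n × Fin n,
        (C q.1 q.2 * X q.1 q.2) • Matrix.single q.1 q.2 (1 : ℂ) := by
      ext i j
      rw [Matrix.sum_apply]
      rw [Finset.sum_eq_single (i, j)]
      · simp [Matrix.hadamard_apply]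
      · intro q _ hq
        have hne : ¬(q.1 = i ∧ q.2 = j) := by
          rintro ⟨h1, h2⟩; exact hq (Prod.ext h1 h2)
        simp only [Matrix.smul_apply, smul_eq_mul]
        rw [Matrix.single_apply_of_ne _ _ _ _ _ hne, mul_zero]
      · intro h; exact absurd (Finset.mem_univ _) h
    rw [hdecomp]
    apply Submodule.sum_mem
    intro q _
    by_cases hq : C q.1 q.2 = 0
    · rw [hq, zero_mul, zero_smul]; exact Submodule.zero_mem _
    · exact Submodule.smul_mem _ _ (Submodule.subset_span ⟨⟨q, hq⟩, rfl⟩)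
  · rw [Submodule.span_le]
    rintro _ ⟨⟨q, hq⟩, rfl⟩
    refine ⟨(C q.1 q.2)⁻¹ • Matrix.single q.1 q.2 (1 : ℂ), ?_⟩
    show Φ ((C q.1 q.2)⁻¹ • Matrix.single q.1 q.2 (1 : ℂ))
      = Matrix.single q.1 q.2 (1 : ℂ)
    rw [LinearMap.map_smul, hΦ]
    ext i j
    by_cases h : q.1 = i ∧ q.2 = j
    · obtain ⟨rfl, rfl⟩ := h
      simp only [Matrix.smul_apply, Matrix.hadamard_apply, smul_eq_mul,
        Matrix.single_apply_same]
      field_simp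
    · simp only [Matrix.smul_apply, Matrix.hadamard_apply, smul_eq_mul]
      rw [Matrix.single_apply_of_ne _ _ _ _ _ h]
      ring

theorem schur_channel_rank {n : ℕ} (C : Matrix (Fin n) (Fin n) ℂ)
    (hC : C.PosSemidef) (hdiag : ∀ i, C i i = 1)
    (Φ : Matrix (Fin n) (Fin n) ℂ →ₗ[ℂ] Matrix (Fin n) (Fin n) ℂ)
    (hΦ : ∀ X, Φ X = C ⊙ X) :
    Module.finrank ℂ (LinearMap.range Φ) =
      (Finset.univ.filter (fun q : Fin n × Fin n => C q.1 q.2 ≠ 0)).card ∧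
    n ^ 2 ≤ Module.finrank ℂ (LinearMap.range Φ) * (C ⊙ C.map (starRingEnd ℂ)).rank := by
  classical
  -- Part 1
  have hli : LinearIndependent ℂ (fun q : {q : Fin n × Fin n // C q.1 q.2 ≠ 0} =>
      Matrix.single q.1.1 q.1.2 (1 : ℂ)) := by
    have heq : (fun q : {q : Fin n × Fin n // C q.1 q.2 ≠ 0} =>
        Matrix.single q.1.1 q.1.2 (1 : ℂ))
        = (Matrix.stdBasis ℂ (Fin n) (Fin n)) ∘ (fun q => q.1) := by
      funext q
      rw [Function.comp_apply, show q.1 = (q.1.1, q.1.2) from rfl,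
        Matrix.stdBasis_eq_single]
    rw [heq]
    exact (Matrix.stdBasis ℂ (Fin n) (Fin n)).linearIndependent.comp _ Subtype.val_injective
  have hrank1 : Module.finrank ℂ (LinearMap.range Φ) =
      (Finset.univ.filter (fun q : Fin n × Fin n => C q.1 q.2 ≠ 0)).card := by
    rw [range_phi C Φ hΦ, finrank_span_eq_card hli, Fintype.card_subtype]
  refine ⟨hrank1, ?_⟩
  -- Part 2
  set S : Finset (Fin n × Fin n) :=
    Finset.univ.filter (fun q : Fin n × Fin n => C q.1 q.2 ≠ 0) with hS
  set A : Matrix (Fin n) (Fin n) ℂ := C ⊙ C.map (starRingEnd ℂ) with hAdef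
  have hCs : ∀ i j, (starRingEnd ℂ) (C i j) = C j i := by
    intro i j
    have := congrFun (congrFun hC.1 j) i
    simpa [Matrix.conjTranspose_apply] using this
  have hAapp : ∀ i j, A i j = C i j * (starRingEnd ℂ) (C i j) := fun i j => rfl
  have hAapp' : ∀ i j, A i j = ((Complex.normSq (C i j) : ℝ) : ℂ) := by
    intro i j; rw [hAapp, Complex.mul_conj]
  have hns_symm : ∀ i j, Complex.normSq (C j i) = Complex.normSq (C i j) := by
    intro i j; rw [← hCs i j, Complex.normSq_conj]
  have hA : A.IsHermitian := by
    apply Matrix.ext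
    intro i j
    rw [Matrix.conjTranspose_apply, hAapp' j i, hAapp' i j]
    rw [show (star (((Complex.normSq (C j i) : ℝ)) : ℂ) : ℂ)
        = (((Complex.normSq (C j i) : ℝ)) : ℂ) from Complex.conj_ofReal _]
    exact congrArg _ (hns_symm i j)
  set lam : Fin n → ℝ := hA.eigenvalues with hlam
  set U : Matrix (Fin n) (Fin n) ℂ := (hA.eigenvectorUnitary : Matrix (Fin n) (Fin n) ℂ)
    with hUdef
  have hU : star U * U = 1 := Unitary.coe_star_mul_self _
  set D : Matrix (Fin n) (Fin n) ℂ := Matrix.diagonal (RCLike.ofReal ∘ lam) with hDdef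
  have hspec : A = U * D * star U := hA.spectral_theorem
  have htr1 : A.trace = (n : ℂ) := by
    have : ∀ i, A i i = 1 := by
      intro i; rw [hAapp, hdiag]; simp
    simp [Matrix.trace, Matrix.diag, this]
  have htr2 : A.trace = ((∑ i, lam i : ℝ) : ℂ) := by
    conv_lhs => rw [hspec]
    rw [Matrix.trace_mul_cycle, hU, Matrix.one_mul, Matrix.trace_diagonal]
    simp only [Function.comp_apply]
    norm_cast
  have hsum1 : ∑ i, lam i = (n : ℝ) := by
    have h := htr2.symm.trans htr1
    exact_mod_cast h
  have hAA : A * A = U * (D * D) * star U := by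
    rw [hspec]
    simp only [Matrix.mul_assoc]
    rw [← Matrix.mul_assoc (star U) U (D * star U), hU, Matrix.one_mul]
  have htrAA : (A * A).trace = ((∑ i, lam i ^ 2 : ℝ) : ℂ) := by
    rw [hAA, Matrix.trace_mul_cycle, hU, Matrix.one_mul,
      Matrix.diagonal_mul_diagonal, Matrix.trace_diagonal]
    simp only [Function.comp_apply]
    norm_cast
    exact congrArg _ (Finset.sum_congr rfl fun i _ => (pow_two (lam i)).symm)
  have hentry : ∀ i k : Fin n, A i k * A k i = ((Complex.normSq (C i k) ^ 2 : ℝ) : ℂ) := by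
    intro i k
    calc A i k * A k i
        = ((Complex.normSq (C i k) : ℝ) : ℂ) * ((Complex.normSq (C k i) : ℝ) : ℂ) := by
          rw [hAapp' i k, hAapp' k i]
      _ = ((Complex.normSq (C i k) ^ 2 : ℝ) : ℂ) := by
          rw [hns_symm i k]; push_cast; ring
  have htrAA2 : (A * A).trace =
      ((∑ q : Fin n × Fin n, Complex.normSq (C q.1 q.2) ^ 2 : ℝ) : ℂ) := by
    rw [Matrix.trace]
    have hdiagAA : ∀ i, (A * A).diag i = ((∑ k, Complex.normSq (C i k) ^ 2 : ℝ) : ℂ) := by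
      intro i
      rw [Matrix.diag_apply, Matrix.mul_apply]
      push_cast
      exact Finset.sum_congr rfl fun k _ => by rw [hentry]; push_cast; ring
    rw [Finset.sum_congr rfl fun i _ => hdiagAA i, ← Complex.ofReal_sum]
    congr 1
    rw [Fintype.sum_prod_type]
  have hsum2 : ∑ i, lam i ^ 2 = ∑ q : Fin n × Fin n, Complex.normSq (C q.1 q.2) ^ 2 := by
    have h := htrAA.symm.trans htrAA2
    exact_mod_cast h
  have hbound : ∑ q : Fin n × Fin n, Complex.normSq (C q.1 q.2) ^ 2 ≤ (S.card : ℝ) := by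
    calc ∑ q : Fin n × Fin n, Complex.normSq (C q.1 q.2) ^ 2
        ≤ ∑ q : Fin n × Fin n, (if C q.1 q.2 ≠ 0 then (1 : ℝ) else 0) := by
          apply Finset.sum_le_sum
          intro q _
          by_cases h : C q.1 q.2 = 0
          · simp [h]
          · rw [if_pos h]
            have habs := correlation_abs_le_one hC hdiag q.1 q.2
            have hns : Complex.normSq (C q.1 q.2) ≤ 1 := by
              rw [← Complex.sq_norm]
              nlinarith [norm_nonneg (C q.1 q.2)]
            have hns0 : 0 ≤ Complex.normSq (C q.1 q.2) := Complex.normSq_nonneg _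
            nlinarith
      _ = (S.card : ℝ) := by rw [Finset.sum_boole, hS]
  set T : Finset (Fin n) := Finset.univ.filter (fun i => lam i ≠ 0) with hT
  have hrank2 : A.rank = T.card := by
    rw [hA.rank_eq_card_non_zero_eigs, Fintype.card_subtype]
  have key : ((n : ℝ)) ^ 2 ≤ (S.card : ℝ) * (A.rank : ℝ) := by
    have h1 : ∑ i ∈ T, lam i = ∑ i, lam i := by
      rw [hT]; exact Finset.sum_filter_ne_zero _
    calc ((n : ℝ)) ^ 2 = (∑ i ∈ T, lam i) ^ 2 := by rw [h1, hsum1]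
      _ ≤ T.card * ∑ i ∈ T, lam i ^ 2 := sq_sum_le_card_mul_sum_sq
      _ ≤ T.card * ∑ i, lam i ^ 2 := by
          apply mul_le_mul_of_nonneg_left _ (Nat.cast_nonneg _)
          exact Finset.sum_le_sum_of_subset_of_nonneg (Finset.filter_subset _ _)
            (fun i _ _ => sq_nonneg _)
      _ ≤ T.card * S.card := by
          apply mul_le_mul_of_nonneg_left _ (Nat.cast_nonneg _)
          rw [hsum2]; exact hbound
      _ = (S.card : ℝ) * (A.rank : ℝ) := by rw [hrank2]; ring
  have hfin : n ^ 2 ≤ S.card * A.rank := by exact_mod_cast key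
  rw [hrank1]
  exact hfin
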